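/- Let A be a commutative ℂ-algebra equipped with a ℂ-bilinear antisymmetric bracket {·,·} : A × A → A. Let n ≥ 1, N ≥ 1, let r : ℂ×ℂ → M_{n²}(ℂ) be skew-symmetric, i.e. P·r(μ,λ)·P = −r(λ,μ) for all λ,μ, let τ : ℂ → ℂ, g^{(0)},…,g^{(N−1)} : ℂ → ℂ with g^{(0)} ≡ 1, and let k : ℂ → GL_n(ℂ) satisfy the N-reflection equation for r. Let L : ℂ → M_n(A) satisfy the linear Poisson relation {L_a(λ), L_b(μ)} = [r_{ab}(λ,μ), L_a(λ) + L_b(μ)] for all λ,μ (brackets taken entrywise, complex matrices regarded as A-valued). Define B(λ) = ∑_{j=0}^{N−1} g^{(j)}(λ)·k^{(j)}(λ)·L(τ^j(λ))·(k^{(j)}(λ))^{−1} and r̄_{ab}(λ,ν) = ∑_{j=0}^{N−1} g^{(j)}(ν)·k^{(j)}_b(ν)·r(λ,τ^j(ν))·(k^{(j)}_b(ν))^{−1}. Then for all λ,μ: {B_a(λ), B_b(μ)} = [r̄_{ab}(λ,μ), B_a(λ)] − [r̄_{ba}(μ,λ), B_b(μ)], where r̄_{ba}(μ,λ) = P·r̄_{ab}(μ,λ)·P.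 -/

import Mathlib

open Matrix Kronecker

noncomputable section

variable {A : Type*} [CommRing A] [Algebra ℂ A]

/-- `x_a = x ⊗ 1`, acting on the tensor square. -/
def legA {R : Type*} [CommRing R] (n : ℕ) (x : Matrix (Fin n) (Fin n) R) :
    Matrix (Fin n × Fin n) (Fin n × Fin n) R :=
  x ⊗ₖ (1 : Matrix (Fin n) (Fin n) R)

/-- `x_b = 1 ⊗ x`, acting on the tensor square. -/
def legB {R : Type*} [CommRing R] (n : ℕ) (x : Matrix (Fin n) (Fin n) R) :
    Matrix (Fin n × Fin n) (Fin n × Fin n) R :=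
  (1 : Matrix (Fin n) (Fin n) R) ⊗ₖ x

/-- The swap (permutation) matrix `P : P(u ⊗ v) = v ⊗ u`. -/
def Pmat (n : ℕ) : Matrix (Fin n × Fin n) (Fin n × Fin n) ℂ :=
  Matrix.of fun i j => if i.1 = j.2 ∧ i.2 = j.1 then 1 else 0

/-- `k⁽ʲ⁾(ν) = k⁽ʲ⁻¹⁾(ν) · k(τʲ⁻¹(ν))`, with `k⁽⁰⁾ = 1`. -/
def kiter {n : ℕ} (k : ℂ → Matrix (Fin n) (Fin n) ℂ) (τ : ℂ → ℂ) :
    ℕ → ℂ → Matrix (Fin n) (Fin n) ℂ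
  | 0, _ => 1
  | j + 1, ν => kiter k τ j ν * k (τ^[j] ν)

/-- `r̄_{ab}(λ,ν) = ∑_{j<N} g⁽ʲ⁾(ν) k⁽ʲ⁾_b(ν) r(λ, τʲ(ν)) (k⁽ʲ⁾_b(ν))⁻¹`. -/
def rbar (n N : ℕ) (r : ℂ → ℂ → Matrix (Fin n × Fin n) (Fin n × Fin n) ℂ)
    (τ : ℂ → ℂ) (g : ℕ → ℂ → ℂ) (k : ℂ → Matrix (Fin n) (Fin n) ℂ)
    (lam ν : ℂ) : Matrix (Fin n × Fin n) (Fin n × Fin n) ℂ :=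
  ∑ j ∈ Finset.range N,
    g j ν • (legB n (kiter k τ j ν) * r lam (τ^[j] ν) * (legB n (kiter k τ j ν))⁻¹)

/-- The classical `N`-reflection equation in compact form. -/
def NRefl (n N : ℕ) (r : ℂ → ℂ → Matrix (Fin n × Fin n) (Fin n × Fin n) ℂ)
    (τ : ℂ → ℂ) (g : ℕ → ℂ → ℂ) (k : ℂ → Matrix (Fin n) (Fin n) ℂ) : Prop :=
  ∀ lam ν : ℂ,
    rbar n N r τ g k lam ν * legA n (k lam) = legA n (k lam) * rbar n N r τ g k (τ lam) ν

/-- A complex matrix regarded as a matrix with entries in the algebra `A`. -/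
def cm (A : Type*) [CommRing A] [Algebra ℂ A] {m : Type*} (X : Matrix m m ℂ) :
    Matrix m m A :=
  X.map (algebraMap ℂ A)

/-- `{X_a, Y_b}` : the `n²×n²` matrix over `A` with `((i,k),(j,l))` entry `{X_{ij}, Y_{kl}}`. -/
def braMat (A : Type*) [CommRing A] [Algebra ℂ A] (br : A →ₗ[ℂ] A →ₗ[ℂ] A) {n : ℕ}
    (X Y : Matrix (Fin n) (Fin n) A) : Matrix (Fin n × Fin n) (Fin n × Fin n) A :=
  Matrix.of fun i j => br (X i.1 j.1) (Y i.2 j.2)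

/-- `B(λ) = ∑_{j<N} g⁽ʲ⁾(λ) k⁽ʲ⁾(λ) L(τʲ(λ)) (k⁽ʲ⁾(λ))⁻¹`. -/
def Bop (A : Type*) [CommRing A] [Algebra ℂ A] (n N : ℕ)
    (τ : ℂ → ℂ) (g : ℕ → ℂ → ℂ) (k : ℂ → Matrix (Fin n) (Fin n) ℂ)
    (L : ℂ → Matrix (Fin n) (Fin n) A) (lam : ℂ) : Matrix (Fin n) (Fin n) A :=
  ∑ j ∈ Finset.range N,
    g j lam • (cm A (kiter k τ j lam) * L (τ^[j] lam) * cm A ((kiter k τ j lam)⁻¹))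


-- Auxiliary lemmas
section Aux
variable {R : Type*} [CommRing R] {n : ℕ}

theorem legA_mul (x y : Matrix (Fin n) (Fin n) R) : legA n (x * y) = legA n x * legA n y := by
  simp [legA, ← Matrix.mul_kronecker_mul]
theorem legB_mul (x y : Matrix (Fin n) (Fin n) R) : legB n (x * y) = legB n x * legB n y := by
  simp [legB, ← Matrix.mul_kronecker_mul]
theorem legA_one : legA n (1 : Matrix (Fin n) (Fin n) R) = 1 := Matrix.one_kronecker_one
theorem legB_one : legB n (1 : Matrix (Fin n) (Fin n) R) = 1 := Matrix.one_kronecker_one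
theorem legA_legB_comm (x y : Matrix (Fin n) (Fin n) R) :
    legA n x * legB n y = legB n y * legA n x := by
  simp [legA, legB, ← Matrix.mul_kronecker_mul]
theorem legA_smul (c : R) (x : Matrix (Fin n) (Fin n) R) : legA n (c • x) = c • legA n x := by
  simp [legA, Matrix.smul_kronecker]
theorem legB_smul (c : R) (x : Matrix (Fin n) (Fin n) R) : legB n (c • x) = c • legB n x := by
  simp [legB, Matrix.kronecker_smul]
theorem legA_sum {ι : Type*} (s : Finset ι) (f : ι → Matrix (Fin n) (Fin n) R) :
    legA n (∑ i ∈ s, f i) = ∑ i ∈ s, legA n (f i) := by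
  ext ⟨i,k⟩ ⟨j,l⟩
  simp [legA, Matrix.sum_apply, Finset.sum_mul]
theorem legB_sum {ι : Type*} (s : Finset ι) (f : ι → Matrix (Fin n) (Fin n) R) :
    legB n (∑ i ∈ s, f i) = ∑ i ∈ s, legB n (f i) := by
  ext ⟨i,k⟩ ⟨j,l⟩
  simp [legB, Matrix.sum_apply, Finset.mul_sum]


theorem cm_mul {m : Type*} [Fintype m] (X Y : Matrix m m ℂ) :
    cm A (X * Y) = cm A X * cm A Y := by
  simp [cm, Matrix.map_mul]
theorem cm_one {m : Type*} [Fintype m] [DecidableEq m] :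
    cm A (1 : Matrix m m ℂ) = 1 := by
  simp [cm, Matrix.map_one]
theorem cm_smul {m : Type*} (c : ℂ) (X : Matrix m m ℂ) : cm A (c • X) = c • cm A X := by
  ext i j
  simp [cm, Algebra.smul_def]
theorem cm_sum {m ι : Type*} (s : Finset ι) (f : ι → Matrix m m ℂ) :
    cm A (∑ i ∈ s, f i) = ∑ i ∈ s, cm A (f i) := by
  ext i j
  simp [cm, Matrix.sum_apply]
theorem cm_neg {m : Type*} (X : Matrix m m ℂ) : cm A (-X) = - cm A X := by
  ext i j; simp [cm]
theorem cm_legA (X : Matrix (Fin n) (Fin n) ℂ) : cm A (legA n X) = legA n (cm A X) := by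
  ext ⟨i,k⟩ ⟨j,l⟩
  by_cases h : k = l <;> simp [cm, legA, Matrix.one_apply, h]
theorem cm_legB (X : Matrix (Fin n) (Fin n) ℂ) : cm A (legB n X) = legB n (cm A X) := by
  ext ⟨i,k⟩ ⟨j,l⟩
  by_cases h : i = j <;> simp [cm, legB, Matrix.one_apply, h]

theorem Pmat_conj_apply (M : Matrix (Fin n × Fin n) (Fin n × Fin n) ℂ)
    (i j : Fin n × Fin n) :
    (Pmat n * M * Pmat n) i j = M (i.2, i.1) (j.2, j.1) := by
  simp only [Matrix.mul_apply, Pmat, Matrix.of_apply, Fintype.sum_prod_type]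
  rw [Finset.sum_comm]
  simp [Finset.sum_mul, Finset.mul_sum, ite_and]

theorem Pmat_mul_Pmat : Pmat n * Pmat n = 1 := by
  ext ⟨i,k⟩ ⟨j,l⟩
  simp only [Matrix.mul_apply, Pmat, Matrix.of_apply, Fintype.sum_prod_type, ite_and]
  simp [Matrix.one_apply, Prod.ext_iff, and_comm, ite_and]

theorem Pmat_conj_legA (x : Matrix (Fin n) (Fin n) ℂ) :
    Pmat n * legA n x * Pmat n = legB n x := by
  ext ⟨i,k⟩ ⟨j,l⟩
  rw [Pmat_conj_apply]
  simp [legA, legB, mul_comm]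

variable (br : A →ₗ[ℂ] A →ₗ[ℂ] A)

theorem braMat_sum_sum {ι κ : Type*} (s : Finset ι) (t : Finset κ)
    (X : ι → Matrix (Fin n) (Fin n) A) (Y : κ → Matrix (Fin n) (Fin n) A) :
    braMat A br (∑ i ∈ s, X i) (∑ j ∈ t, Y j)
      = ∑ i ∈ s, ∑ j ∈ t, braMat A br (X i) (Y j) := by
  ext ⟨i,k⟩ ⟨j,l⟩
  simp only [braMat, Matrix.of_apply, Matrix.sum_apply, map_sum, LinearMap.sum_apply]
  rw [Finset.sum_comm]

theorem braMat_smul_left (c : ℂ) (X Y : Matrix (Fin n) (Fin n) A) :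
    braMat A br (c • X) Y = c • braMat A br X Y := by
  ext ⟨i,k⟩ ⟨j,l⟩
  simp [braMat]

theorem braMat_smul_right (c : ℂ) (X Y : Matrix (Fin n) (Fin n) A) :
    braMat A br X (c • Y) = c • braMat A br X Y := by
  ext ⟨i,k⟩ ⟨j,l⟩
  simp [braMat]

theorem braMat_cmA_left (C : Matrix (Fin n) (Fin n) ℂ) (X Y : Matrix (Fin n) (Fin n) A) :
    braMat A br (cm A C * X) Y = legA n (cm A C) * braMat A br X Y := by
  ext ⟨i,k⟩ ⟨j,l⟩
  have h : ∀ p, (cm A C) i p * X p j = C i p • X p j := fun p => (Algebra.smul_def _ _).symm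
  simp only [braMat, Matrix.of_apply, Matrix.mul_apply, legA, Matrix.kroneckerMap_apply,
    Fintype.sum_prod_type, h, map_sum, LinearMap.map_smul, LinearMap.sum_apply,
    LinearMap.smul_apply, Matrix.one_apply, mul_ite, mul_one, mul_zero, ite_mul, zero_mul]
  rw [Finset.sum_comm]
  simp [Finset.sum_ite_eq, cm, Algebra.smul_def, mul_comm]

theorem braMat_cmA_right (D : Matrix (Fin n) (Fin n) ℂ) (X Y : Matrix (Fin n) (Fin n) A) :
    braMat A br (X * cm A D) Y = braMat A br X Y * legA n (cm A D) := by
  ext ⟨i,k⟩ ⟨j,l⟩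
  have h : ∀ p, X i p * (cm A D) p j = D p j • X i p := fun p => by
    rw [Algebra.smul_def, mul_comm]; rfl
  simp only [braMat, Matrix.of_apply, Matrix.mul_apply, legA, Matrix.kroneckerMap_apply,
    Fintype.sum_prod_type, h, map_sum, LinearMap.map_smul, LinearMap.sum_apply,
    LinearMap.smul_apply, Matrix.one_apply, mul_ite, mul_one, mul_zero, ite_mul, zero_mul]
  rw [Finset.sum_comm]
  simp [Finset.sum_ite_eq, cm, Algebra.smul_def, mul_comm]

theorem braMat_cmB_left (E : Matrix (Fin n) (Fin n) ℂ) (X Y : Matrix (Fin n) (Fin n) A) :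
    braMat A br X (cm A E * Y) = legB n (cm A E) * braMat A br X Y := by
  ext ⟨i,k⟩ ⟨j,l⟩
  have h : ∀ p, (cm A E) k p * Y p l = E k p • Y p l := fun p => (Algebra.smul_def _ _).symm
  simp only [braMat, Matrix.of_apply, Matrix.mul_apply, legB, Matrix.kroneckerMap_apply,
    Fintype.sum_prod_type, h, map_sum, LinearMap.map_smul, LinearMap.sum_apply,
    LinearMap.smul_apply, Matrix.one_apply, mul_ite, one_mul, mul_zero, ite_mul, zero_mul]
  simp [Finset.sum_ite_eq, cm, Algebra.smul_def, mul_comm]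

theorem braMat_cmB_right (F : Matrix (Fin n) (Fin n) ℂ) (X Y : Matrix (Fin n) (Fin n) A) :
    braMat A br X (Y * cm A F) = braMat A br X Y * legB n (cm A F) := by
  ext ⟨i,k⟩ ⟨j,l⟩
  have h : ∀ p, Y k p * (cm A F) p l = F p l • Y k p := fun p => by
    rw [Algebra.smul_def, mul_comm]; rfl
  simp only [braMat, Matrix.of_apply, Matrix.mul_apply, legB, Matrix.kroneckerMap_apply,
    Fintype.sum_prod_type, h, map_sum, LinearMap.map_smul, LinearMap.sum_apply,
    LinearMap.smul_apply, Matrix.one_apply, mul_ite, one_mul, mul_zero, ite_mul, zero_mul]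
  simp [Finset.sum_ite_eq, cm, Algebra.smul_def, mul_comm]

theorem mul_inv_of_isUnit {m : Type*} [Fintype m] [DecidableEq m] {X : Matrix m m ℂ}
    (h : IsUnit X) : X * X⁻¹ = 1 :=
  Matrix.mul_nonsing_inv X ((Matrix.isUnit_iff_isUnit_det X).mp h)
theorem inv_mul_of_isUnit {m : Type*} [Fintype m] [DecidableEq m] {X : Matrix m m ℂ}
    (h : IsUnit X) : X⁻¹ * X = 1 :=
  Matrix.nonsing_inv_mul X ((Matrix.isUnit_iff_isUnit_det X).mp h)

theorem legB_inv {X : Matrix (Fin n) (Fin n) ℂ} (h : IsUnit X) :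
    (legB n X)⁻¹ = legB n X⁻¹ :=
  Matrix.inv_eq_right_inv (by rw [← legB_mul, mul_inv_of_isUnit h, legB_one])

theorem Pmat_conj_legB (x : Matrix (Fin n) (Fin n) ℂ) :
    Pmat n * legB n x * Pmat n = legA n x := by
  have h := congrArg (fun M => Pmat n * M * Pmat n) (Pmat_conj_legA x)
  rw [← h]
  calc Pmat n * (Pmat n * legA n x * Pmat n) * Pmat n
      = (Pmat n * Pmat n) * legA n x * (Pmat n * Pmat n) := by noncomm_ring
    _ = legA n x := by rw [Pmat_mul_Pmat]; noncomm_ring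

theorem Pmat_mul_legA (x : Matrix (Fin n) (Fin n) ℂ) :
    Pmat n * legA n x = legB n x * Pmat n := by
  have h := Pmat_conj_legA x
  calc Pmat n * legA n x = Pmat n * legA n x * (Pmat n * Pmat n) := by
        rw [Pmat_mul_Pmat, mul_one]
    _ = (Pmat n * legA n x * Pmat n) * Pmat n := by noncomm_ring
    _ = legB n x * Pmat n := by rw [h]

theorem Pmat_mul_legB (x : Matrix (Fin n) (Fin n) ℂ) :
    Pmat n * legB n x = legA n x * Pmat n := by
  have h := Pmat_conj_legB x
  calc Pmat n * legB n x = Pmat n * legB n x * (Pmat n * Pmat n) := by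
        rw [Pmat_mul_Pmat, mul_one]
    _ = (Pmat n * legB n x * Pmat n) * Pmat n := by noncomm_ring
    _ = legA n x * Pmat n := by rw [h]

theorem conj_comm_mul {M : Type*} [Ring M] (C C' x y : M) (hC' : C' * C = 1) :
    C * (x * y) * C' = (C * x * C') * (C * y * C') := by
  calc C * (x * y) * C' = C * x * (C' * C) * y * C' := by rw [hC']; noncomm_ring
    _ = (C * x * C') * (C * y * C') := by noncomm_ring

section main
variable {N : ℕ} {r : ℂ → ℂ → Matrix (Fin n × Fin n) (Fin n × Fin n) ℂ}
  {τ : ℂ → ℂ} {g : ℕ → ℂ → ℂ} {k : ℂ → Matrix (Fin n) (Fin n) ℂ}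

theorem isUnit_kiter (hk : ∀ ν : ℂ, IsUnit (k ν)) (j : ℕ) (ν : ℂ) :
    IsUnit (kiter k τ j ν) := by
  induction j with
  | zero => exact isUnit_one
  | succ j ih => exact ih.mul (hk _)

theorem rbar_eq (hk : ∀ ν : ℂ, IsUnit (k ν)) (lam ν : ℂ) :
    rbar n N r τ g k lam ν = ∑ j ∈ Finset.range N,
      g j ν • (legB n (kiter k τ j ν) * r lam (τ^[j] ν) * legB n ((kiter k τ j ν)⁻¹)) := by
  unfold rbar
  refine Finset.sum_congr rfl fun j _ => ?_
  rw [legB_inv (isUnit_kiter hk j ν)]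

theorem refl_iter (hrefl : NRefl n N r τ g k) (i : ℕ) (lam ν : ℂ) :
    rbar n N r τ g k lam ν * legA n (kiter k τ i lam)
      = legA n (kiter k τ i lam) * rbar n N r τ g k (τ^[i] lam) ν := by
  induction i with
  | zero => simp [kiter, legA_one]
  | succ i ih =>
      show rbar n N r τ g k lam ν * legA n (kiter k τ i lam * k (τ^[i] lam)) = _
      rw [legA_mul, ← mul_assoc, ih, mul_assoc, hrefl (τ^[i] lam) ν,
        Function.iterate_succ_apply', ← mul_assoc, ← legA_mul]
      rfl

theorem conj_rbar_a (hrefl : NRefl n N r τ g k) (hk : ∀ ν : ℂ, IsUnit (k ν))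
    (i : ℕ) (lam ν : ℂ) :
    legA n (kiter k τ i lam) * rbar n N r τ g k (τ^[i] lam) ν * legA n ((kiter k τ i lam)⁻¹)
      = rbar n N r τ g k lam ν := by
  rw [← refl_iter hrefl, mul_assoc, ← legA_mul, mul_inv_of_isUnit (isUnit_kiter hk i lam),
    legA_one, mul_one]

theorem key1 (hrefl : NRefl n N r τ g k) (hk : ∀ ν : ℂ, IsUnit (k ν)) (i : ℕ) (lam mu : ℂ) :
    ∑ j ∈ Finset.range N, g j mu •
      (legA n (kiter k τ i lam) * legB n (kiter k τ j mu) * r (τ^[i] lam) (τ^[j] mu)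
        * (legB n ((kiter k τ j mu)⁻¹) * legA n ((kiter k τ i lam)⁻¹)))
      = rbar n N r τ g k lam mu := by
  rw [← conj_rbar_a hrefl hk i lam mu, rbar_eq hk, Finset.mul_sum, Finset.sum_mul]
  refine Finset.sum_congr rfl fun j _ => ?_
  rw [Matrix.mul_smul, Matrix.smul_mul]
  congr 1
  noncomm_ring


theorem key2 (hrefl : NRefl n N r τ g k) (hk : ∀ ν : ℂ, IsUnit (k ν))
    (hskew : ∀ lam mu : ℂ, Pmat n * r mu lam * Pmat n = - r lam mu)
    (j : ℕ) (lam mu : ℂ) :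
    ∑ i ∈ Finset.range N, g i lam •
      (legA n (kiter k τ i lam) * legB n (kiter k τ j mu) * r (τ^[i] lam) (τ^[j] mu)
        * (legB n ((kiter k τ j mu)⁻¹) * legA n ((kiter k τ i lam)⁻¹)))
      = -(Pmat n * rbar n N r τ g k mu lam * Pmat n) := by
  set Kmj := kiter k τ j mu with hKmj
  have hterm : ∀ i : ℕ,
      legA n (kiter k τ i lam) * legB n Kmj * r (τ^[i] lam) (τ^[j] mu)
        * (legB n (Kmj⁻¹) * legA n ((kiter k τ i lam)⁻¹))
      = -(Pmat n * (legA n Kmj *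
          (legB n (kiter k τ i lam) * r (τ^[j] mu) (τ^[i] lam) * legB n ((kiter k τ i lam)⁻¹))
          * legA n (Kmj⁻¹)) * Pmat n) := by
    intro i
    have h1 : r (τ^[i] lam) (τ^[j] mu)
        = -(Pmat n * r (τ^[j] mu) (τ^[i] lam) * Pmat n) := by
      rw [hskew (τ^[i] lam) (τ^[j] mu), neg_neg]
    rw [h1]
    set Kl := kiter k τ i lam
    set rr := r (τ^[j] mu) (τ^[i] lam)
    have core : legA n Kl * legB n Kmj * (Pmat n * rr * Pmat n)
          * (legB n (Kmj⁻¹) * legA n (Kl⁻¹))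
        = Pmat n * (legA n Kmj * (legB n Kl * rr * legB n (Kl⁻¹)) * legA n (Kmj⁻¹))
          * Pmat n := by
      calc legA n Kl * legB n Kmj * (Pmat n * rr * Pmat n)
            * (legB n (Kmj⁻¹) * legA n (Kl⁻¹))
          = (legA n Kl * (legB n Kmj * Pmat n)) * rr
            * ((Pmat n * legB n (Kmj⁻¹)) * legA n (Kl⁻¹)) := by noncomm_ring
        _ = (legA n Kl * (Pmat n * legA n Kmj)) * rr
            * ((legA n (Kmj⁻¹) * Pmat n) * legA n (Kl⁻¹)) := by
              rw [← Pmat_mul_legA, Pmat_mul_legB]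
        _ = ((legA n Kl * Pmat n) * legA n Kmj) * rr
            * (legA n (Kmj⁻¹) * (Pmat n * legA n (Kl⁻¹))) := by noncomm_ring
        _ = ((Pmat n * legB n Kl) * legA n Kmj) * rr
            * (legA n (Kmj⁻¹) * (legB n (Kl⁻¹) * Pmat n)) := by
              rw [Pmat_mul_legB, ← Pmat_mul_legA]
        _ = Pmat n * ((legB n Kl * legA n Kmj) * rr
            * (legA n (Kmj⁻¹) * legB n (Kl⁻¹))) * Pmat n := by noncomm_ring
        _ = Pmat n * ((legA n Kmj * legB n Kl) * rr
            * (legB n (Kl⁻¹) * legA n (Kmj⁻¹))) * Pmat n := by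
              rw [legA_legB_comm, legA_legB_comm]
        _ = Pmat n * (legA n Kmj * (legB n Kl * rr * legB n (Kl⁻¹))
            * legA n (Kmj⁻¹)) * Pmat n := by noncomm_ring
    calc legA n Kl * legB n Kmj * (-(Pmat n * rr * Pmat n))
          * (legB n (Kmj⁻¹) * legA n (Kl⁻¹))
        = -(legA n Kl * legB n Kmj * (Pmat n * rr * Pmat n)
          * (legB n (Kmj⁻¹) * legA n (Kl⁻¹))) := by noncomm_ring
      _ = _ := by rw [core]
  calc ∑ i ∈ Finset.range N, g i lam •
        (legA n (kiter k τ i lam) * legB n Kmj * r (τ^[i] lam) (τ^[j] mu)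
          * (legB n (Kmj⁻¹) * legA n ((kiter k τ i lam)⁻¹)))
      = ∑ i ∈ Finset.range N, -(Pmat n * (legA n Kmj *
          (g i lam • (legB n (kiter k τ i lam) * r (τ^[j] mu) (τ^[i] lam)
            * legB n ((kiter k τ i lam)⁻¹)))
          * legA n (Kmj⁻¹)) * Pmat n) := by
        refine Finset.sum_congr rfl fun i _ => ?_
        rw [hterm i]
        simp [Matrix.mul_smul, Matrix.smul_mul]
    _ = -(Pmat n * (legA n Kmj * (∑ i ∈ Finset.range N,
          g i lam • (legB n (kiter k τ i lam) * r (τ^[j] mu) (τ^[i] lam)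
            * legB n ((kiter k τ i lam)⁻¹)))
          * legA n (Kmj⁻¹)) * Pmat n) := by
        simp only [← Finset.sum_neg_distrib, Finset.mul_sum, Finset.sum_mul]
    _ = -(Pmat n * (legA n Kmj * rbar n N r τ g k (τ^[j] mu) lam
          * legA n (Kmj⁻¹)) * Pmat n) := by rw [← rbar_eq hk]
    _ = -(Pmat n * rbar n N r τ g k mu lam * Pmat n) := by
        rw [conj_rbar_a hrefl hk j mu lam]

theorem conj_identity {M : Type*} [Ring M] (U U' V V' ρ La Lb Z Ma Mb : M)
    (hUU' : U * U' = 1) (hU'U : U' * U = 1) (hVV' : V * V' = 1) (hV'V : V' * V = 1)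
    (hVLa : V * La = La * V) (hUMb : U * Mb = Mb * U)
    (hW : V * Lb * V' = Mb) (hMa : U * La * U' = Ma)
    (hZ : Z = ρ * (La + Lb) - (La + Lb) * ρ) :
    (U*V) * Z * (V'*U')
      = ((U*V)*ρ*(V'*U')) * (Ma + Mb) - (Ma + Mb) * ((U*V)*ρ*(V'*U')) := by
  subst hZ
  have hC'C : (V'*U') * (U*V) = 1 := by
    rw [show (V'*U')*(U*V) = V'*((U'*U)*V) by noncomm_ring, hU'U, one_mul, hV'V]
  rw [show (U*V)*(ρ*(La+Lb) - (La+Lb)*ρ)*(V'*U')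
      = (U*V)*(ρ*(La+Lb))*(V'*U') - (U*V)*((La+Lb)*ρ)*(V'*U') by noncomm_ring,
    conj_comm_mul _ _ _ _ hC'C, conj_comm_mul _ _ _ _ hC'C]
  have h1 : (U*V)*La*(V'*U') = Ma := by
    rw [← hMa]
    calc (U*V)*La*(V'*U') = U*((V*La)*V')*U' := by noncomm_ring
      _ = U*(La*(V*V'))*U' := by rw [hVLa]; noncomm_ring
      _ = U*La*U' := by rw [hVV']; noncomm_ring
  have h2 : (U*V)*Lb*(V'*U') = Mb := by
    calc (U*V)*Lb*(V'*U') = U*((V*Lb*V')*U') := by noncomm_ring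
      _ = U*(Mb*U') := by rw [hW]
      _ = (U*Mb)*U' := by noncomm_ring
      _ = Mb*(U*U') := by rw [hUMb]; noncomm_ring
      _ = Mb := by rw [hUU', mul_one]
  have hS : (U*V)*(La+Lb)*(V'*U') = Ma + Mb := by
    calc (U*V)*(La+Lb)*(V'*U') = (U*V)*La*(V'*U') + (U*V)*Lb*(V'*U') := by noncomm_ring
      _ = Ma + Mb := by rw [h1, h2]
  rw [hS]

theorem perterm (hk : ∀ ν : ℂ, IsUnit (k ν))
    (L : ℂ → Matrix (Fin n) (Fin n) A)
    (hL : ∀ lam mu : ℂ,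
      braMat A br (L lam) (L mu)
        = cm A (r lam mu) * (legA n (L lam) + legB n (L mu))
          - (legA n (L lam) + legB n (L mu)) * cm A (r lam mu))
    (i j : ℕ) (lam mu : ℂ) :
    braMat A br (cm A (kiter k τ i lam) * L (τ^[i] lam) * cm A ((kiter k τ i lam)⁻¹))
        (cm A (kiter k τ j mu) * L (τ^[j] mu) * cm A ((kiter k τ j mu)⁻¹))
      = cm A (legA n (kiter k τ i lam) * legB n (kiter k τ j mu) * r (τ^[i] lam) (τ^[j] mu)
            * (legB n ((kiter k τ j mu)⁻¹) * legA n ((kiter k τ i lam)⁻¹)))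
          * (legA n (cm A (kiter k τ i lam) * L (τ^[i] lam) * cm A ((kiter k τ i lam)⁻¹))
             + legB n (cm A (kiter k τ j mu) * L (τ^[j] mu) * cm A ((kiter k τ j mu)⁻¹)))
        - (legA n (cm A (kiter k τ i lam) * L (τ^[i] lam) * cm A ((kiter k τ i lam)⁻¹))
             + legB n (cm A (kiter k τ j mu) * L (τ^[j] mu) * cm A ((kiter k τ j mu)⁻¹)))
          * cm A (legA n (kiter k τ i lam) * legB n (kiter k τ j mu)
              * r (τ^[i] lam) (τ^[j] mu)
              * (legB n ((kiter k τ j mu)⁻¹) * legA n ((kiter k τ i lam)⁻¹))) := by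
  have hKlu : IsUnit (kiter k τ i lam) := isUnit_kiter hk i lam
  have hKmu : IsUnit (kiter k τ j mu) := isUnit_kiter hk j mu
  have hUU' : legA n (cm A (kiter k τ i lam)) * legA n (cm A ((kiter k τ i lam)⁻¹)) = 1 := by
    rw [← legA_mul, ← cm_mul, mul_inv_of_isUnit hKlu, cm_one, legA_one]
  have hU'U : legA n (cm A ((kiter k τ i lam)⁻¹)) * legA n (cm A (kiter k τ i lam)) = 1 := by
    rw [← legA_mul, ← cm_mul, inv_mul_of_isUnit hKlu, cm_one, legA_one]
  have hVV' : legB n (cm A (kiter k τ j mu)) * legB n (cm A ((kiter k τ j mu)⁻¹)) = 1 := by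
    rw [← legB_mul, ← cm_mul, mul_inv_of_isUnit hKmu, cm_one, legB_one]
  have hV'V : legB n (cm A ((kiter k τ j mu)⁻¹)) * legB n (cm A (kiter k τ j mu)) = 1 := by
    rw [← legB_mul, ← cm_mul, inv_mul_of_isUnit hKmu, cm_one, legB_one]
  have step1 : braMat A br
      (cm A (kiter k τ i lam) * L (τ^[i] lam) * cm A ((kiter k τ i lam)⁻¹))
      (cm A (kiter k τ j mu) * L (τ^[j] mu) * cm A ((kiter k τ j mu)⁻¹))
      = (legA n (cm A (kiter k τ i lam)) * legB n (cm A (kiter k τ j mu)))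
        * braMat A br (L (τ^[i] lam)) (L (τ^[j] mu))
        * (legB n (cm A ((kiter k τ j mu)⁻¹)) * legA n (cm A ((kiter k τ i lam)⁻¹))) := by
    rw [braMat_cmA_right, braMat_cmA_left, braMat_cmB_right, braMat_cmB_left]
    noncomm_ring
  have hcm : cm A (legA n (kiter k τ i lam) * legB n (kiter k τ j mu)
        * r (τ^[i] lam) (τ^[j] mu)
        * (legB n ((kiter k τ j mu)⁻¹) * legA n ((kiter k τ i lam)⁻¹)))
      = (legA n (cm A (kiter k τ i lam)) * legB n (cm A (kiter k τ j mu)))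
        * cm A (r (τ^[i] lam) (τ^[j] mu))
        * (legB n (cm A ((kiter k τ j mu)⁻¹)) * legA n (cm A ((kiter k τ i lam)⁻¹))) := by
    rw [cm_mul, cm_mul, cm_mul, cm_mul, cm_legA, cm_legB, cm_legA, cm_legB]
  have hMa : legA n (cm A (kiter k τ i lam)) * legA n (L (τ^[i] lam))
        * legA n (cm A ((kiter k τ i lam)⁻¹))
      = legA n (cm A (kiter k τ i lam) * L (τ^[i] lam) * cm A ((kiter k τ i lam)⁻¹)) := by
    rw [legA_mul, legA_mul]
  have hW : legB n (cm A (kiter k τ j mu)) * legB n (L (τ^[j] mu))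
        * legB n (cm A ((kiter k τ j mu)⁻¹))
      = legB n (cm A (kiter k τ j mu) * L (τ^[j] mu) * cm A ((kiter k τ j mu)⁻¹)) := by
    rw [legB_mul, legB_mul]
  rw [step1, hcm]
  exact conj_identity _ _ _ _ _ _ _ _ _ _ hUU' hU'U hVV' hV'V
    ((legA_legB_comm _ _).symm) (legA_legB_comm _ _) hW hMa (hL _ _)

theorem legA_csmul (c : ℂ) (x : Matrix (Fin n) (Fin n) A) :
    legA n (c • x) = c • legA n x := by
  ext ⟨i,p⟩ ⟨j,q⟩
  simp [legA, smul_mul_assoc]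
theorem legB_csmul (c : ℂ) (x : Matrix (Fin n) (Fin n) A) :
    legB n (c • x) = c • legB n x := by
  ext ⟨i,p⟩ ⟨j,q⟩
  simp [legB, mul_smul_comm]

theorem assembly {S : Type*} [Ring S] [Algebra ℂ S] (N : ℕ) (gi gj : ℕ → ℂ)
    (ρ : ℕ → ℕ → S) (X Y : ℕ → S) (R1 R2 : S)
    (h1 : ∀ i ∈ Finset.range N, ∑ j ∈ Finset.range N, gj j • ρ i j = R1)
    (h2 : ∀ j ∈ Finset.range N, ∑ i ∈ Finset.range N, gi i • ρ i j = - R2) :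
    ∑ i ∈ Finset.range N, ∑ j ∈ Finset.range N, gi i • (gj j •
        (ρ i j * (X i + Y j) - (X i + Y j) * ρ i j))
    = (R1 * (∑ i ∈ Finset.range N, gi i • X i)
        - (∑ i ∈ Finset.range N, gi i • X i) * R1)
      - (R2 * (∑ j ∈ Finset.range N, gj j • Y j)
        - (∑ j ∈ Finset.range N, gj j • Y j) * R2) := by
  have e : ∀ i j, gi i • (gj j • (ρ i j * (X i + Y j) - (X i + Y j) * ρ i j))
      = (gi i • (gj j • (ρ i j * X i)) + gi i • (gj j • (ρ i j * Y j)))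
        - (gi i • (gj j • (X i * ρ i j)) + gi i • (gj j • (Y j * ρ i j))) := by
    intro i j
    simp only [mul_add, add_mul, smul_sub, smul_add]
  simp only [e, Finset.sum_sub_distrib, Finset.sum_add_distrib]
  have hS1 : ∑ i ∈ Finset.range N, ∑ j ∈ Finset.range N, gi i • (gj j • (ρ i j * X i))
      = R1 * ∑ i ∈ Finset.range N, gi i • X i := by
    calc ∑ i ∈ Finset.range N, ∑ j ∈ Finset.range N, gi i • (gj j • (ρ i j * X i))
        = ∑ i ∈ Finset.range N, gi i • ((∑ j ∈ Finset.range N, gj j • ρ i j) * X i) := by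
          refine Finset.sum_congr rfl fun i _ => ?_
          rw [← Finset.smul_sum, Finset.sum_mul]
          congr 1
          exact Finset.sum_congr rfl fun j _ => (smul_mul_assoc _ _ _).symm
      _ = ∑ i ∈ Finset.range N, gi i • (R1 * X i) :=
          Finset.sum_congr rfl fun i hi => by rw [h1 i hi]
      _ = R1 * ∑ i ∈ Finset.range N, gi i • X i := by
          rw [Finset.mul_sum]
          exact Finset.sum_congr rfl fun i _ => (mul_smul_comm _ _ _).symm
  have hS3 : ∑ i ∈ Finset.range N, ∑ j ∈ Finset.range N, gi i • (gj j • (X i * ρ i j))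
      = (∑ i ∈ Finset.range N, gi i • X i) * R1 := by
    calc ∑ i ∈ Finset.range N, ∑ j ∈ Finset.range N, gi i • (gj j • (X i * ρ i j))
        = ∑ i ∈ Finset.range N, gi i • (X i * (∑ j ∈ Finset.range N, gj j • ρ i j)) := by
          refine Finset.sum_congr rfl fun i _ => ?_
          rw [← Finset.smul_sum, Finset.mul_sum]
          congr 1
          exact Finset.sum_congr rfl fun j _ => (mul_smul_comm _ _ _).symm
      _ = ∑ i ∈ Finset.range N, gi i • (X i * R1) :=
          Finset.sum_congr rfl fun i hi => by rw [h1 i hi]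
      _ = (∑ i ∈ Finset.range N, gi i • X i) * R1 := by
          rw [Finset.sum_mul]
          exact Finset.sum_congr rfl fun i _ => (smul_mul_assoc _ _ _).symm
  have hS2 : ∑ i ∈ Finset.range N, ∑ j ∈ Finset.range N, gi i • (gj j • (ρ i j * Y j))
      = -(R2 * ∑ j ∈ Finset.range N, gj j • Y j) := by
    rw [Finset.sum_comm]
    calc ∑ j ∈ Finset.range N, ∑ i ∈ Finset.range N, gi i • (gj j • (ρ i j * Y j))
        = ∑ j ∈ Finset.range N, gj j • ((∑ i ∈ Finset.range N, gi i • ρ i j) * Y j) := by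
          refine Finset.sum_congr rfl fun j _ => ?_
          rw [show (∑ i ∈ Finset.range N, gi i • gj j • (ρ i j * Y j))
              = ∑ i ∈ Finset.range N, gj j • ((gi i • ρ i j) * Y j) from
            Finset.sum_congr rfl fun i _ => by
              rw [smul_comm (gi i) (gj j), smul_mul_assoc], ← Finset.smul_sum,
            ← Finset.sum_mul]
      _ = ∑ j ∈ Finset.range N, gj j • ((-R2) * Y j) :=
          Finset.sum_congr rfl fun j hj => by rw [h2 j hj]
      _ = -(R2 * ∑ j ∈ Finset.range N, gj j • Y j) := by
          rw [Finset.mul_sum, ← Finset.sum_neg_distrib]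
          refine Finset.sum_congr rfl fun j _ => ?_
          rw [neg_mul, smul_neg, mul_smul_comm]
  have hS4 : ∑ i ∈ Finset.range N, ∑ j ∈ Finset.range N, gi i • (gj j • (Y j * ρ i j))
      = -((∑ j ∈ Finset.range N, gj j • Y j) * R2) := by
    rw [Finset.sum_comm]
    calc ∑ j ∈ Finset.range N, ∑ i ∈ Finset.range N, gi i • (gj j • (Y j * ρ i j))
        = ∑ j ∈ Finset.range N, gj j • (Y j * (∑ i ∈ Finset.range N, gi i • ρ i j)) := by
          refine Finset.sum_congr rfl fun j _ => ?_
          rw [show (∑ i ∈ Finset.range N, gi i • gj j • (Y j * ρ i j))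
              = ∑ i ∈ Finset.range N, gj j • (Y j * (gi i • ρ i j)) from
            Finset.sum_congr rfl fun i _ => by
              rw [smul_comm (gi i) (gj j), ← mul_smul_comm], ← Finset.smul_sum,
            ← Finset.mul_sum]
      _ = ∑ j ∈ Finset.range N, gj j • (Y j * (-R2)) :=
          Finset.sum_congr rfl fun j hj => by rw [h2 j hj]
      _ = -((∑ j ∈ Finset.range N, gj j • Y j) * R2) := by
          rw [Finset.sum_mul, ← Finset.sum_neg_distrib]
          refine Finset.sum_congr rfl fun j _ => ?_
          rw [mul_neg, smul_neg, smul_mul_assoc]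
  rw [hS1, hS2, hS3, hS4]
  abel

end main


end Aux

/-- If `L` satisfies the linear Poisson relation
`{L_a(λ), L_b(μ)} = [r_{ab}(λ,μ), L_a(λ) + L_b(μ)]` for a skew-symmetric solution `r`,
and `k` solves the `N`-reflection equation, then `B` satisfies
`{B_a(λ), B_b(μ)} = [r̄_{ab}(λ,μ), B_a(λ)] - [r̄_{ba}(μ,λ), B_b(μ)]`. -/
theorem stmt16 (n N : ℕ) (hn : 1 ≤ n) (hN : 1 ≤ N)
    (A : Type*) [CommRing A] [Algebra ℂ A]
    (br : A →ₗ[ℂ] A →ₗ[ℂ] A) (hanti : ∀ x y : A, br x y = - br y x)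
    (r : ℂ → ℂ → Matrix (Fin n × Fin n) (Fin n × Fin n) ℂ)
    (hskew : ∀ lam mu : ℂ, Pmat n * r mu lam * Pmat n = - r lam mu)
    (τ : ℂ → ℂ) (g : ℕ → ℂ → ℂ) (hg0 : ∀ ν : ℂ, g 0 ν = 1)
    (k : ℂ → Matrix (Fin n) (Fin n) ℂ) (hk : ∀ ν : ℂ, IsUnit (k ν))
    (hrefl : NRefl n N r τ g k)
    (L : ℂ → Matrix (Fin n) (Fin n) A)
    (hL : ∀ lam mu : ℂ,
      braMat A br (L lam) (L mu)
        = cm A (r lam mu) * (legA n (L lam) + legB n (L mu))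
          - (legA n (L lam) + legB n (L mu)) * cm A (r lam mu)) :
    ∀ lam mu : ℂ,
      braMat A br (Bop A n N τ g k L lam) (Bop A n N τ g k L mu)
        = (cm A (rbar n N r τ g k lam mu) * legA n (Bop A n N τ g k L lam)
            - legA n (Bop A n N τ g k L lam) * cm A (rbar n N r τ g k lam mu))
          - (cm A (Pmat n * rbar n N r τ g k mu lam * Pmat n) * legB n (Bop A n N τ g k L mu)
            - legB n (Bop A n N τ g k L mu)
              * cm A (Pmat n * rbar n N r τ g k mu lam * Pmat n)) := by
  intro lam mu
  have hρ1 : ∀ i ∈ Finset.range N, ∑ j ∈ Finset.range N, g j mu •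
        cm A (legA n (kiter k τ i lam) * legB n (kiter k τ j mu) * r (τ^[i] lam) (τ^[j] mu)
          * (legB n ((kiter k τ j mu)⁻¹) * legA n ((kiter k τ i lam)⁻¹)))
      = cm A (rbar n N r τ g k lam mu) := by
    intro i _
    calc ∑ j ∈ Finset.range N, g j mu • cm A (legA n (kiter k τ i lam) * legB n (kiter k τ j mu) * r (τ^[i] lam) (τ^[j] mu)
          * (legB n ((kiter k τ j mu)⁻¹) * legA n ((kiter k τ i lam)⁻¹)))
        = ∑ j ∈ Finset.range N, cm A (g j mu • (legA n (kiter k τ i lam) * legB n (kiter k τ j mu) * r (τ^[i] lam) (τ^[j] mu)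
          * (legB n ((kiter k τ j mu)⁻¹) * legA n ((kiter k τ i lam)⁻¹)))) :=
          Finset.sum_congr rfl fun j _ => (cm_smul _ _).symm
      _ = cm A (∑ j ∈ Finset.range N, g j mu • (legA n (kiter k τ i lam) * legB n (kiter k τ j mu) * r (τ^[i] lam) (τ^[j] mu)
          * (legB n ((kiter k τ j mu)⁻¹) * legA n ((kiter k τ i lam)⁻¹)))) := (cm_sum _ _).symm
      _ = cm A (rbar n N r τ g k lam mu) := by rw [key1 hrefl hk i lam mu]
  have hρ2 : ∀ j ∈ Finset.range N, ∑ i ∈ Finset.range N, g i lam •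
        cm A (legA n (kiter k τ i lam) * legB n (kiter k τ j mu) * r (τ^[i] lam) (τ^[j] mu)
          * (legB n ((kiter k τ j mu)⁻¹) * legA n ((kiter k τ i lam)⁻¹)))
      = -(cm A (Pmat n * rbar n N r τ g k mu lam * Pmat n)) := by
    intro j _
    calc ∑ i ∈ Finset.range N, g i lam • cm A (legA n (kiter k τ i lam) * legB n (kiter k τ j mu) * r (τ^[i] lam) (τ^[j] mu)
          * (legB n ((kiter k τ j mu)⁻¹) * legA n ((kiter k τ i lam)⁻¹)))
        = ∑ i ∈ Finset.range N, cm A (g i lam • (legA n (kiter k τ i lam) * legB n (kiter k τ j mu) * r (τ^[i] lam) (τ^[j] mu)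
          * (legB n ((kiter k τ j mu)⁻¹) * legA n ((kiter k τ i lam)⁻¹)))) :=
          Finset.sum_congr rfl fun i _ => (cm_smul _ _).symm
      _ = cm A (∑ i ∈ Finset.range N, g i lam • (legA n (kiter k τ i lam) * legB n (kiter k τ j mu) * r (τ^[i] lam) (τ^[j] mu)
          * (legB n ((kiter k τ j mu)⁻¹) * legA n ((kiter k τ i lam)⁻¹)))) := (cm_sum _ _).symm
      _ = cm A (-(Pmat n * rbar n N r τ g k mu lam * Pmat n)) := by
          rw [key2 hrefl hk hskew j lam mu]
      _ = -(cm A (Pmat n * rbar n N r τ g k mu lam * Pmat n)) := cm_neg _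
  have hBl : ∑ i ∈ Finset.range N, g i lam • legA n (cm A (kiter k τ i lam) * L (τ^[i] lam) * cm A ((kiter k τ i lam)⁻¹))
      = legA n (Bop A n N τ g k L lam) := by
    simp only [Bop, legA_sum, legA_csmul]
  have hBm : ∑ j ∈ Finset.range N, g j mu • legB n (cm A (kiter k τ j mu) * L (τ^[j] mu) * cm A ((kiter k τ j mu)⁻¹))
      = legB n (Bop A n N τ g k L mu) := by
    simp only [Bop, legB_sum, legB_csmul]
  calc braMat A br (Bop A n N τ g k L lam) (Bop A n N τ g k L mu)
      = ∑ i ∈ Finset.range N, ∑ j ∈ Finset.range N, g i lam • (g j mu •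
          braMat A br (cm A (kiter k τ i lam) * L (τ^[i] lam) * cm A ((kiter k τ i lam)⁻¹)) (cm A (kiter k τ j mu) * L (τ^[j] mu) * cm A ((kiter k τ j mu)⁻¹))) := by
        simp only [Bop]
        rw [braMat_sum_sum]
        exact Finset.sum_congr rfl fun i _ => Finset.sum_congr rfl fun j _ => by
          rw [braMat_smul_left, braMat_smul_right]
    _ = ∑ i ∈ Finset.range N, ∑ j ∈ Finset.range N, g i lam • (g j mu •
          (cm A (legA n (kiter k τ i lam) * legB n (kiter k τ j mu) * r (τ^[i] lam) (τ^[j] mu)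
          * (legB n ((kiter k τ j mu)⁻¹) * legA n ((kiter k τ i lam)⁻¹)))
            * (legA n (cm A (kiter k τ i lam) * L (τ^[i] lam) * cm A ((kiter k τ i lam)⁻¹)) + legB n (cm A (kiter k τ j mu) * L (τ^[j] mu) * cm A ((kiter k τ j mu)⁻¹)))
          - (legA n (cm A (kiter k τ i lam) * L (τ^[i] lam) * cm A ((kiter k τ i lam)⁻¹)) + legB n (cm A (kiter k τ j mu) * L (τ^[j] mu) * cm A ((kiter k τ j mu)⁻¹)))
            * cm A (legA n (kiter k τ i lam) * legB n (kiter k τ j mu) * r (τ^[i] lam) (τ^[j] mu)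
          * (legB n ((kiter k τ j mu)⁻¹) * legA n ((kiter k τ i lam)⁻¹))))) :=
        Finset.sum_congr rfl fun i _ => Finset.sum_congr rfl fun j _ => by
          rw [perterm br hk L hL i j lam mu]
    _ = (cm A (rbar n N r τ g k lam mu)
          * (∑ i ∈ Finset.range N, g i lam • legA n (cm A (kiter k τ i lam) * L (τ^[i] lam) * cm A ((kiter k τ i lam)⁻¹)))
        - (∑ i ∈ Finset.range N, g i lam • legA n (cm A (kiter k τ i lam) * L (τ^[i] lam) * cm A ((kiter k τ i lam)⁻¹)))
          * cm A (rbar n N r τ g k lam mu))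
        - (cm A (Pmat n * rbar n N r τ g k mu lam * Pmat n)
          * (∑ j ∈ Finset.range N, g j mu • legB n (cm A (kiter k τ j mu) * L (τ^[j] mu) * cm A ((kiter k τ j mu)⁻¹)))
        - (∑ j ∈ Finset.range N, g j mu • legB n (cm A (kiter k τ j mu) * L (τ^[j] mu) * cm A ((kiter k τ j mu)⁻¹)))
          * cm A (Pmat n * rbar n N r τ g k mu lam * Pmat n)) :=
        assembly N (fun i => g i lam) (fun j => g j mu)
          (fun i j => cm A (legA n (kiter k τ i lam) * legB n (kiter k τ j mu) * r (τ^[i] lam) (τ^[j] mu)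
          * (legB n ((kiter k τ j mu)⁻¹) * legA n ((kiter k τ i lam)⁻¹))))
          (fun i => legA n (cm A (kiter k τ i lam) * L (τ^[i] lam) * cm A ((kiter k τ i lam)⁻¹)))
          (fun j => legB n (cm A (kiter k τ j mu) * L (τ^[j] mu) * cm A ((kiter k τ j mu)⁻¹)))
          (cm A (rbar n N r τ g k lam mu))
          (cm A (Pmat n * rbar n N r τ g k mu lam * Pmat n)) hρ1 hρ2
    _ = _ := by rw [hBl, hBm]
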